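/- arXiv:math/0111302 — 3 statements merged into one kernel-verified Lean document; each statement's English description precedes it below -/
import Mathlib

section
/- If Δ is a (d-1)-dimensional Buchsbaum simplicial complex (every vertex link is Cohen–Macaulay, hence has non-negative h-vector), then the alternating Euler characteristics of skeleta satisfy (-1)^i χ_i(Δ) ≥ 0 for all 0 ≤ i ≤ ⌊(d-1)/2⌋, where χ_i(Δ) = ∑_{j=0}^{i} (-1)^j f_j(Δ). -/
open Finset

/-- An abstract simplicial complex on vertex set `V`, given by its finite set of faces. -/
structure SC (V : Type*) [DecidableEq V] where
  faces : Finset (Finset V)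
  empty_mem : ∅ ∈ faces
  down_closed : ∀ F ∈ faces, ∀ G ⊆ F, G ∈ faces

variable {V : Type*} [DecidableEq V] [Fintype V]

/-- The link of a vertex `v`. -/
def link (S : Finset (Finset V)) (v : V) : Finset (Finset V) :=
  S.filter fun F => v ∉ F ∧ insert v F ∈ S

/-- `fnum S m` is the number of faces of cardinality `m`, i.e. `f_{m-1}`. -/
def fnum (S : Finset (Finset V)) (m : ℕ) : ℕ := (S.filter fun F => F.card = m).card

/-- A complex is pure of dimension `d-1` if every face is contained in a face with `d` vertices. -/
def IsPure (S : Finset (Finset V)) (d : ℕ) : Prop :=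
  ∀ F ∈ S, ∃ G ∈ S, F ⊆ G ∧ G.card = d

/-- The `h`-numbers of a complex `S` of dimension `D - 1`:
`h_i = ∑_{j=0}^i (-1)^{i-j} C(D-j, D-i) f_{j-1}`. -/
def hnum (D : ℕ) (S : Finset (Finset V)) (i : ℕ) : ℚ :=
  ∑ j ∈ Finset.range (i + 1),
    (-1 : ℚ) ^ (i - j) * ((D - j).choose (D - i) : ℚ) * (fnum S j : ℚ)

theorem count_lemma (S : Finset (Finset V)) (hdc : ∀ F ∈ S, ∀ G ⊆ F, G ∈ S) (j : ℕ) :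
    ∑ v : V, fnum (link S v) j = (j + 1) * fnum S (j + 1) := by
  classical
  unfold fnum
  have lhs : ∑ v : V, ((link S v).filter fun F => F.card = j).card
      = ((univ : Finset V).sigma fun v => (link S v).filter fun F => F.card = j).card := by
    rw [Finset.card_sigma]
  have rhs : (j + 1) * (S.filter fun F => F.card = j + 1).card
      = (((S.filter fun F => F.card = j + 1)).sigma fun G => G).card := by
    rw [Finset.card_sigma]
    rw [Finset.sum_congr rfl (fun G hG => ?_), Finset.sum_const, smul_eq_mul, mul_comm]
    exact (Finset.mem_filter.mp hG).2
  rw [lhs, rhs]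
  apply Finset.card_bij' (i := fun p _ => (⟨insert p.1 p.2, p.1⟩ : Σ _ : Finset V, V))
    (j := fun q _ => (⟨q.2, q.1.erase q.2⟩ : Σ _ : V, Finset V))
  · intro p hp
    rw [Finset.mem_sigma] at hp ⊢
    obtain ⟨-, hF⟩ := hp
    rw [Finset.mem_filter] at hF
    obtain ⟨hFl, hcard⟩ := hF
    rw [link, Finset.mem_filter] at hFl
    refine ⟨Finset.mem_filter.mpr ⟨hFl.2.2, ?_⟩, Finset.mem_insert_self _ _⟩
    rw [Finset.card_insert_of_notMem hFl.2.1, hcard]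
  · intro q hq
    rw [Finset.mem_sigma] at hq
    obtain ⟨hG, hv⟩ := hq
    rw [Finset.mem_filter] at hG
    obtain ⟨hGS, hGcard⟩ := hG
    rw [Finset.mem_sigma]
    refine ⟨Finset.mem_univ _, Finset.mem_filter.mpr ⟨?_, ?_⟩⟩
    · rw [link, Finset.mem_filter]
      exact ⟨hdc _ hGS _ (Finset.erase_subset _ _), Finset.notMem_erase _ _,
        by rw [Finset.insert_erase hv]; exact hGS⟩
    · rw [Finset.card_erase_of_mem hv, hGcard]; rfl
  · intro p hp
    rw [Finset.mem_sigma] at hp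
    obtain ⟨-, hF⟩ := hp
    rw [Finset.mem_filter, link, Finset.mem_filter] at hF
    have : p.1 ∉ p.2 := hF.1.2.1
    simp [Finset.erase_insert this]
  · intro q hq
    rw [Finset.mem_sigma] at hq
    simp [Finset.insert_erase hq.2]

theorem orth (D i j l : ℕ) (hj : j ≤ i) (hl : l ≤ i) (hiD : i ≤ D) :
    ∑ k ∈ range (i + 1), (-1 : ℚ) ^ (k - j) * ((D - j).choose (D - k) : ℚ) *
      ((D - k).choose (D - l) : ℚ) = if j = l then 1 else 0 := by
  rcases lt_or_ge l j with hlj | hjl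
  · rw [if_neg (by omega)]
    apply Finset.sum_eq_zero
    intro k hk
    rw [Finset.mem_range] at hk
    rcases lt_or_ge k j with hkj | hjk
    · have : (D - j).choose (D - k) = 0 := Nat.choose_eq_zero_of_lt (by omega)
      rw [this]; push_cast; ring
    · have : (D - k).choose (D - l) = 0 := Nat.choose_eq_zero_of_lt (by omega)
      rw [this]; push_cast; ring
  · -- j ≤ l
    have hsub : Icc j l ⊆ range (i + 1) := by
      intro k hk; rw [Finset.mem_Icc] at hk; rw [Finset.mem_range]; omega
    rw [← Finset.sum_subset hsub (fun k hk hk2 => ?_)]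
    swap
    · rw [Finset.mem_range] at hk; rw [Finset.mem_Icc] at hk2
      rcases lt_or_ge k j with hkj | hjk
      · have : (D - j).choose (D - k) = 0 := Nat.choose_eq_zero_of_lt (by omega)
        rw [this]; push_cast; ring
      · have hkl : l < k := by omega
        have : (D - k).choose (D - l) = 0 := Nat.choose_eq_zero_of_lt (by omega)
        rw [this]; push_cast; ring
    have key : ∀ k ∈ Icc j l, (-1 : ℚ) ^ (k - j) * ((D - j).choose (D - k) : ℚ) *
        ((D - k).choose (D - l) : ℚ)
        = ((D - j).choose (D - l) : ℚ) * ((-1 : ℚ) ^ (k - j) * ((l - j).choose (l - k) : ℚ)) := by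
      intro k hk
      rw [Finset.mem_Icc] at hk
      have h1 : (D - j).choose (D - k) * (D - k).choose (D - l)
          = (D - j).choose (D - l) * ((D - j) - (D - l)).choose ((D - k) - (D - l)) :=
        Nat.choose_mul (by omega)
      have h2 : (D - j) - (D - l) = l - j := by omega
      have h3 : (D - k) - (D - l) = l - k := by omega
      rw [h2, h3] at h1
      have h4 := congrArg (fun n : ℕ => (n : ℚ)) h1
      push_cast at h4
      linear_combination (-1 : ℚ) ^ (k - j) * h4
    rw [Finset.sum_congr rfl key, ← Finset.mul_sum]
    have : Icc j l = Ico j (l + 1) := rfl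
    rw [this, Finset.sum_Ico_eq_sum_range]
    have hrange : l + 1 - j = (l - j) + 1 := by omega
    rw [hrange]
    set m := l - j with hm
    have hterm : ∀ t ∈ range (m + 1), (-1 : ℚ) ^ (j + t - j) * (m.choose (l - (j + t)) : ℚ)
        = (-1 : ℚ) ^ t * (m.choose t : ℚ) := by
      intro t ht
      rw [Finset.mem_range] at ht
      have h1 : j + t - j = t := by omega
      have h2 : l - (j + t) = m - t := by omega
      rw [h1, h2, Nat.choose_symm (by omega)]
    rw [Finset.sum_congr rfl hterm]
    have halt : (∑ t ∈ range (m + 1), (-1 : ℚ) ^ t * (m.choose t : ℚ)) =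
        if m = 0 then 1 else 0 := by
      have := @Int.alternating_sum_range_choose m
      have := congrArg (fun z : ℤ => (z : ℚ)) this
      push_cast at this
      rw [this]
    rw [halt]
    by_cases hjl' : j = l
    · rw [if_pos hjl', if_pos (by omega), mul_one]
      have : D - l = D - j := by omega
      rw [this, Nat.choose_self]; norm_num
    · rw [if_neg hjl', if_neg (by omega), mul_zero]

theorem alt_sum_nonneg (u : ℕ → ℚ) (a : ℕ) :
    ∀ b, a ≤ b → (∀ j, a ≤ j → j ≤ b → 0 ≤ u j) → (∀ j, a ≤ j → j + 1 ≤ b → u j ≤ u (j + 1)) →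
    0 ≤ (∑ j ∈ Icc a b, (-1 : ℚ) ^ (b - j) * u j) ∧
      (∑ j ∈ Icc a b, (-1 : ℚ) ^ (b - j) * u j) ≤ u b := by
  intro b hab
  induction b, hab using Nat.le_induction with
  | base =>
    intro h0 _
    rw [Finset.Icc_self, Finset.sum_singleton, Nat.sub_self, pow_zero, one_mul]
    exact ⟨h0 a le_rfl le_rfl, le_rfl⟩
  | succ b hb ih =>
    intro h0 hm
    obtain ⟨ih1, ih2⟩ := ih (fun j hj hj' => h0 j hj (by omega)) (fun j hj hj' => hm j hj (by omega))
    have hins : Icc a (b + 1) = insert (b + 1) (Icc a b) := by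
      ext x; simp [Finset.mem_Icc]; omega
    rw [hins, Finset.sum_insert (by simp)]
    have hsplit : (∑ j ∈ Icc a b, (-1 : ℚ) ^ (b + 1 - j) * u j)
        = -∑ j ∈ Icc a b, (-1 : ℚ) ^ (b - j) * u j := by
      rw [← Finset.sum_neg_distrib]
      apply Finset.sum_congr rfl
      intro j hj
      rw [Finset.mem_Icc] at hj
      have : b + 1 - j = (b - j) + 1 := by omega
      rw [this, pow_succ]
      ring
    rw [hsplit, Nat.sub_self, pow_zero, one_mul]
    have hub : u b ≤ u (b + 1) := hm b hb (by omega)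
    constructor
    · linarith
    · linarith [h0 (b+1) (by omega) le_rfl]

theorem c_nonneg (D i k : ℕ) (hk : k ≤ i) (hiD : 2 * i ≤ D) :
    0 ≤ ∑ l ∈ range (i + 1), (-1 : ℚ) ^ (i - l) * ((D - k).choose (D - l) : ℚ) / ((l : ℚ) + 1) := by
  have hsub : Icc k i ⊆ range (i + 1) := by
    intro x hx; rw [Finset.mem_Icc] at hx; rw [Finset.mem_range]; omega
  rw [← Finset.sum_subset hsub (fun l hl hl2 => ?_)]
  swap
  · rw [Finset.mem_range] at hl; rw [Finset.mem_Icc] at hl2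
    have hlk : l < k := by omega
    have : (D - k).choose (D - l) = 0 := Nat.choose_eq_zero_of_lt (by omega)
    rw [this]; push_cast; ring
  set u : ℕ → ℚ := fun l => ((D - k).choose (D - l) : ℚ) / ((l : ℚ) + 1) with hu
  have hmain := alt_sum_nonneg u k i hk (fun j _ _ => by positivity) ?_
  · refine le_trans hmain.1 (le_of_eq ?_)
    apply Finset.sum_congr rfl
    intro l hl
    rw [hu]
    ring
  · -- monotonicity
    intro j hkj hji
    have hD : D - (j + 1) = D - j - 1 := by omega
    set n := D - k with hn
    set s := D - j - 1 with hs
    have hsn : D - j = s + 1 := by omega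
    have hnat : (D - k).choose (D - j) * (j + 2) ≤ (D - k).choose (D - (j + 1)) * (j + 1) := by
      rw [hsn]
      have hcanc : n.choose (s + 1) * (j + 2) * (s + 1) ≤ n.choose s * (j + 1) * (s + 1) := by
        calc n.choose (s + 1) * (j + 2) * (s + 1)
            = n.choose (s + 1) * (s + 1) * (j + 2) := by ring
          _ = n.choose s * (n - s) * (j + 2) := by rw [Nat.choose_succ_right_eq]
          _ = n.choose s * ((n - s) * (j + 2)) := by ring
          _ ≤ n.choose s * ((j + 1) * (s + 1)) := by
              apply Nat.mul_le_mul_left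
              apply Nat.mul_le_mul <;> omega
          _ = n.choose s * (j + 1) * (s + 1) := by ring
      exact Nat.le_of_mul_le_mul_right hcanc (by omega)
    have hq : ((D - k).choose (D - j) : ℚ) * ((j : ℚ) + 2) ≤
        ((D - k).choose (D - (j + 1)) : ℚ) * ((j : ℚ) + 1) := by exact_mod_cast hnat
    rw [hu]
    rw [div_le_div_iff₀ (by positivity) (by positivity)]
    push_cast
    linarith

theorem neg_one_pow_sub (i j : ℕ) (h : j ≤ i) : (-1 : ℚ) ^ (i - j) = (-1) ^ i * (-1) ^ j := by
  have h1 : (-1 : ℚ) ^ (i - j) * (-1) ^ j = (-1) ^ i := by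
    rw [← pow_add]; congr 1; omega
  have h2 : (-1 : ℚ) ^ j * (-1) ^ j = 1 := by
    rw [← pow_add]; exact Even.neg_one_pow ⟨j, rfl⟩
  calc (-1 : ℚ) ^ (i - j) = (-1) ^ (i - j) * ((-1) ^ j * (-1) ^ j) := by rw [h2, mul_one]
    _ = (-1) ^ i * (-1) ^ j := by rw [← mul_assoc, h1]

/-- if every vertex link of the pure (d-1)-dimensional complex Δ has a
non-negative h-vector (e.g. Δ is Buchsbaum), then (-1)^i χ_i(Δ) ≥ 0 for 0 ≤ i ≤ ⌊(d-1)/2⌋. -/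
theorem statement4 (d : ℕ) (Δ : SC V) (hpure : IsPure Δ.faces d)
    (hCM : ∀ v : V, ∀ i ≤ d - 1, 0 ≤ hnum (d - 1) (link Δ.faces v) i) :
    ∀ i ≤ (d - 1) / 2,
      0 ≤ (-1 : ℚ) ^ i * ∑ j ∈ Finset.range (i + 1), (-1 : ℚ) ^ j * (fnum Δ.faces (j + 1) : ℚ) := by
  intro i hi
  set D := d - 1 with hD
  have hiD : 2 * i ≤ D := by
    rw [Nat.le_div_iff_mul_le (by norm_num)] at hi; omega
  set c : ℕ → ℚ := fun k =>
    ∑ l ∈ range (i + 1), (-1 : ℚ) ^ (i - l) * ((D - k).choose (D - l) : ℚ) / ((l : ℚ) + 1)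
    with hc
  have hH : ∀ k ∈ range (i + 1), (∑ v : V, hnum D (link Δ.faces v) k)
      = ∑ j ∈ range (i + 1), (-1 : ℚ) ^ (k - j) * ((D - j).choose (D - k) : ℚ) *
          (((j : ℚ) + 1) * (fnum Δ.faces (j + 1) : ℚ)) := by
    intro k hk
    rw [Finset.mem_range] at hk
    unfold hnum
    rw [Finset.sum_comm]
    have step1 : ∀ j ∈ range (k + 1),
        (∑ v : V, (-1 : ℚ) ^ (k - j) * ((D - j).choose (D - k) : ℚ) *
          (fnum (link Δ.faces v) j : ℚ))
        = (-1 : ℚ) ^ (k - j) * ((D - j).choose (D - k) : ℚ) *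
          (((j : ℚ) + 1) * (fnum Δ.faces (j + 1) : ℚ)) := by
      intro j _
      rw [← Finset.mul_sum, ← Nat.cast_sum, count_lemma Δ.faces Δ.down_closed j]
      push_cast
      ring
    rw [Finset.sum_congr rfl step1]
    apply Finset.sum_subset (Finset.range_subset_range.mpr (by omega))
    intro j hj hj2
    rw [Finset.mem_range] at hj hj2
    have : (D - j).choose (D - k) = 0 := Nat.choose_eq_zero_of_lt (by omega)
    rw [this]
    push_cast
    ring
  have key : (∑ k ∈ range (i + 1), c k * (∑ v : V, hnum D (link Δ.faces v) k))
      = (-1 : ℚ) ^ i * ∑ j ∈ range (i + 1), (-1 : ℚ) ^ j * (fnum Δ.faces (j + 1) : ℚ) := by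
    rw [Finset.sum_congr rfl (fun k hk => by rw [hH k hk])]
    rw [Finset.sum_congr rfl (fun k _ => Finset.mul_sum _ _ _)]
    rw [Finset.sum_comm]
    have inner : ∀ j ∈ range (i + 1),
        (∑ k ∈ range (i + 1), c k * ((-1 : ℚ) ^ (k - j) * ((D - j).choose (D - k) : ℚ) *
          (((j : ℚ) + 1) * (fnum Δ.faces (j + 1) : ℚ))))
        = (-1 : ℚ) ^ i * ((-1 : ℚ) ^ j * (fnum Δ.faces (j + 1) : ℚ)) := by
      intro j hj
      rw [Finset.mem_range] at hj
      have hji : j ≤ i := by omega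
      have e1 : ∀ k ∈ range (i + 1),
          c k * ((-1 : ℚ) ^ (k - j) * ((D - j).choose (D - k) : ℚ) *
            (((j : ℚ) + 1) * (fnum Δ.faces (j + 1) : ℚ)))
          = ∑ l ∈ range (i + 1),
              ((-1 : ℚ) ^ (i - l) / ((l : ℚ) + 1) * (((j : ℚ) + 1) * (fnum Δ.faces (j + 1) : ℚ)))
              * ((-1 : ℚ) ^ (k - j) * ((D - j).choose (D - k) : ℚ) *
                  ((D - k).choose (D - l) : ℚ)) := by
        intro k _
        rw [hc, Finset.sum_mul]
        apply Finset.sum_congr rfl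
        intro l _
        ring
      rw [Finset.sum_congr rfl e1, Finset.sum_comm]
      have e2 : ∀ l ∈ range (i + 1),
          (∑ k ∈ range (i + 1),
            ((-1 : ℚ) ^ (i - l) / ((l : ℚ) + 1) * (((j : ℚ) + 1) * (fnum Δ.faces (j + 1) : ℚ)))
            * ((-1 : ℚ) ^ (k - j) * ((D - j).choose (D - k) : ℚ) *
                ((D - k).choose (D - l) : ℚ)))
          = if j = l then
              (-1 : ℚ) ^ (i - l) / ((l : ℚ) + 1) * (((j : ℚ) + 1) * (fnum Δ.faces (j + 1) : ℚ))
            else 0 := by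
        intro l hl
        rw [Finset.mem_range] at hl
        rw [← Finset.mul_sum, orth D i j l hji (by omega) (by omega), mul_ite, mul_one, mul_zero]
      rw [Finset.sum_congr rfl e2, Finset.sum_ite_eq (range (i + 1)) j, if_pos (Finset.mem_range.mpr hj)]
      rw [neg_one_pow_sub i j hji]
      have hj0 : ((j : ℚ) + 1) ≠ 0 := by positivity
      field_simp
    rw [Finset.sum_congr rfl inner, ← Finset.mul_sum]
  rw [← key]
  apply Finset.sum_nonneg
  intro k hk
  rw [Finset.mem_range] at hk
  apply mul_nonneg
  · rw [hc]
    exact c_nonneg D i k (by omega) hiD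
  · exact Finset.sum_nonneg fun v _ => hCM v k (by omega)
end

section
/- For a pure (2k+1)-dimensional simplicial complex Δ and any 0 ≤ r ≤ 2k+2, the ordinary h-number h_r(Δ) can be expressed in terms of the short simplicial h-numbers as h_r(Δ) = (-1)^r C(2k+2, r) + ∑_{i=0}^{r-1} h̃_i(Δ) · C(2k+1-i, 2k+2-r) · ∑_{j=i+1}^{r} (1/j)(-1)^{r-j} C(r-i-1, r-j). -/
open Finset

variable {V : Type*} [DecidableEq V] [Fintype V]

/-- Double counting: pairs `(v, F)` with `F ∈ lk v`, `|F| = m` correspond to pairs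
`(G, v)` with `G` a face of cardinality `m+1` and `v ∈ G`. -/
lemma sum_fnum_link (S : Finset (Finset V)) (hdc : ∀ F ∈ S, ∀ G ⊆ F, G ∈ S) (m : ℕ) :
    ∑ v : V, fnum (link S v) m = (m + 1) * fnum S (m + 1) := by
  have hL : ∑ v : V, fnum (link S v) m
      = ((univ : Finset V).sigma fun v => (link S v).filter fun F => F.card = m).card := by
    rw [Finset.card_sigma]; rfl
  have hR : (m + 1) * fnum S (m + 1)
      = ((S.filter fun G => G.card = m + 1).sigma fun G => (G : Finset V)).card := by
    rw [Finset.card_sigma]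
    rw [Finset.sum_congr rfl (fun G hG => (Finset.mem_filter.mp hG).2), Finset.sum_const,
      smul_eq_mul, Nat.mul_comm]
    rfl
  rw [hL, hR]
  refine Finset.card_bij' (fun p _ => ⟨insert p.1 p.2, p.1⟩)
    (fun q _ => ⟨q.2, q.1.erase q.2⟩) ?_ ?_ ?_ ?_
  · rintro ⟨v, F⟩ hp
    simp only [Finset.mem_sigma, Finset.mem_filter, link, Finset.mem_univ, true_and] at hp ⊢
    obtain ⟨⟨hFS, hvF, hins⟩, hcard⟩ := hp
    refine ⟨⟨hins, ?_⟩, Finset.mem_insert_self _ _⟩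
    rw [Finset.card_insert_of_notMem hvF, hcard]
  · rintro ⟨G, v⟩ hq
    simp only [Finset.mem_sigma, Finset.mem_filter, link, Finset.mem_univ, true_and] at hq ⊢
    obtain ⟨⟨hGS, hcard⟩, hvG⟩ := hq
    refine ⟨?_, ?_⟩
    · try simp only [link, Finset.mem_filter]
      exact ⟨hdc G hGS _ (Finset.erase_subset _ _), Finset.notMem_erase _ _,
        by rwa [Finset.insert_erase hvG]⟩
    · rw [Finset.card_erase_of_mem hvG, hcard]; omega
  · rintro ⟨v, F⟩ hp
    simp only [Finset.mem_sigma, Finset.mem_filter, link, Finset.mem_univ, true_and] at hp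
    simp [Finset.erase_insert hp.1.2.1]
  · rintro ⟨G, v⟩ hq
    simp only [Finset.mem_sigma, Finset.mem_filter, link, Finset.mem_univ, true_and] at hq
    simp [Finset.insert_erase hq.2]

lemma alt_sum_q (n : ℕ) :
    ∑ t ∈ Finset.range (n + 1), (-1 : ℚ) ^ t * (n.choose t : ℚ)
      = if n = 0 then 1 else 0 := by
  have := Int.alternating_sum_range_choose (n := n)
  have h2 := congrArg (Int.cast : ℤ → ℚ) this
  push_cast at h2
  convert h2 using 2

/-- Binomial inversion: `f_{m-1} = ∑_{i ≤ m} C(D-i, D-m) h_i`. -/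
lemma fnum_eq_sum_hnum (D : ℕ) (S : Finset (Finset V)) (m : ℕ) (hm : m ≤ D) :
    (fnum S m : ℚ)
      = ∑ i ∈ Finset.range (m + 1), ((D - i).choose (D - m) : ℚ) * hnum D S i := by
  unfold hnum
  simp_rw [Finset.mul_sum]
  rw [Finset.sum_comm' (s := Finset.range (m+1)) (t := fun i => Finset.range (i+1))
    (t' := Finset.range (m+1)) (s' := fun j => Finset.Icc j m)]
  · have key : ∀ j ∈ Finset.range (m+1),
        (∑ i ∈ Finset.Icc j m, ((D - i).choose (D - m) : ℚ) *
          ((-1 : ℚ) ^ (i - j) * ((D - j).choose (D - i) : ℚ) * (fnum S j : ℚ)))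
        = if j = m then (fnum S j : ℚ) else 0 := by
      intro j hj
      rw [Finset.mem_range] at hj
      have hjm : j ≤ m := by omega
      have step : ∀ i ∈ Finset.Icc j m,
          ((D - i).choose (D - m) : ℚ) *
            ((-1 : ℚ) ^ (i - j) * ((D - j).choose (D - i) : ℚ) * (fnum S j : ℚ))
          = ((D - j).choose (D - m) : ℚ) * (fnum S j : ℚ) *
            ((-1 : ℚ) ^ (i - j) * ((m - j).choose (m - i) : ℚ)) := by
        intro i hi
        rw [Finset.mem_Icc] at hi
        have h1 : (D - i) ≤ (D - j) := by omega
        have h2 : (D - m) ≤ (D - i) := by omega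
        have := Nat.choose_mul (n := D - j) h2
        have e1 : D - j - (D - m) = m - j := by omega
        have e2 : D - i - (D - m) = m - i := by omega
        rw [e1, e2] at this
        have : ((D - j).choose (D - i) * (D - i).choose (D - m) : ℚ)
            = ((D - j).choose (D - m) * (m - j).choose (m - i) : ℚ) := by
          exact_mod_cast congrArg (Nat.cast : ℕ → ℚ) this
        push_cast at this ⊢
        linear_combination ((-1:ℚ)^(i-j) * (fnum S j : ℚ)) * this
      rw [Finset.sum_congr rfl step, ← Finset.mul_sum]
      have reidx : ∑ i ∈ Finset.Icc j m,
          ((-1 : ℚ) ^ (i - j) * ((m - j).choose (m - i) : ℚ))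
          = ∑ t ∈ Finset.range (m - j + 1), (-1 : ℚ) ^ t * ((m - j).choose t : ℚ) := by
        rw [← Finset.Ico_add_one_right_eq_Icc, Finset.sum_Ico_eq_sum_range]
        have : m + 1 - j = m - j + 1 := by omega
        rw [this]
        refine Finset.sum_congr rfl fun t ht => ?_
        rw [Finset.mem_range] at ht
        have e3 : j + t - j = t := by omega
        have e4 : m - (j + t) = (m - j) - t := by omega
        rw [e3, e4, Nat.choose_symm (by omega)]
      rw [reidx, alt_sum_q]
      by_cases hcase : j = m
      · subst hcase
        simp
      · rw [if_neg (by omega), if_neg hcase, mul_zero]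
    rw [Finset.sum_congr rfl key, Finset.sum_ite_eq' (Finset.range (m+1)) m]
    rw [if_pos (Finset.self_mem_range_succ m)]
  · intro i j
    simp only [Finset.mem_range, Finset.mem_Icc]
    omega

/-- for a pure (2k+1)-dimensional complex Δ and 0 ≤ r ≤ 2k+2,
h_r(Δ) = (-1)^r C(2k+2, r)
       + ∑_{i=0}^{r-1} h̃_i(Δ) C(2k+1-i, 2k+2-r) ∑_{j=i+1}^{r} (1/j)(-1)^{r-j} C(r-i-1, r-j). -/
theorem statement10 (k : ℕ) (Δ : SC V) (hpure : IsPure Δ.faces (2 * k + 2))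
    (r : ℕ) (hr : r ≤ 2 * k + 2) :
    hnum (2 * k + 2) Δ.faces r
      = (-1 : ℚ) ^ r * ((2 * k + 2).choose r : ℚ) +
        ∑ i ∈ Finset.range r,
          (∑ v : V, hnum (2 * k + 1) (link Δ.faces v) i) *
            ((2 * k + 1 - i).choose (2 * k + 2 - r) : ℚ) *
            ∑ j ∈ Finset.Icc (i + 1) r,
              (1 / (j : ℚ)) * (-1 : ℚ) ^ (r - j) * ((r - i - 1).choose (r - j) : ℚ) := by
  have hf0 : fnum Δ.faces 0 = 1 := by
    unfold fnum
    have : Δ.faces.filter (fun F => F.card = 0) = {∅} := by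
      ext F
      simp only [Finset.mem_filter, Finset.card_eq_zero, Finset.mem_singleton]
      exact ⟨fun h => h.2, fun h => ⟨h ▸ Δ.empty_mem, h⟩⟩
    rw [this, Finset.card_singleton]
  conv_lhs => rw [hnum]
  rw [Finset.sum_range_succ']
  have hconst : (-1 : ℚ) ^ (r - 0) * ((2 * k + 2 - 0).choose (2 * k + 2 - r) : ℚ) *
      (fnum Δ.faces 0 : ℚ) = (-1 : ℚ) ^ r * ((2 * k + 2).choose r : ℚ) := by
    rw [hf0, Nat.sub_zero, Nat.sub_zero, Nat.choose_symm hr]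
    norm_num
  rw [hconst, add_comm]
  congr 1
  -- main sum
  have step1 : ∀ j ∈ Finset.range r,
      (-1 : ℚ) ^ (r - (j + 1)) * ((2 * k + 2 - (j + 1)).choose (2 * k + 2 - r) : ℚ) *
        (fnum Δ.faces (j + 1) : ℚ)
      = ∑ i ∈ Finset.range (j + 1),
          (-1 : ℚ) ^ (r - (j + 1)) * ((2 * k + 1 - j).choose (2 * k + 2 - r) : ℚ) *
            (1 / ((j : ℚ) + 1)) * ((2 * k + 1 - i).choose (2 * k + 1 - j) : ℚ) *
            (∑ v : V, hnum (2 * k + 1) (link Δ.faces v) i) := by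
    intro j hj
    rw [Finset.mem_range] at hj
    have e : 2 * k + 2 - (j + 1) = 2 * k + 1 - j := by omega
    rw [e]
    have hA : ((j : ℚ) + 1) * (fnum Δ.faces (j + 1) : ℚ)
        = ∑ v : V, (fnum (link Δ.faces v) j : ℚ) := by
      have := sum_fnum_link Δ.faces Δ.down_closed j
      have h2 := congrArg (Nat.cast : ℕ → ℚ) this
      push_cast at h2
      linear_combination h2.symm
    have hB : ∑ v : V, (fnum (link Δ.faces v) j : ℚ)
        = ∑ i ∈ Finset.range (j + 1), ((2 * k + 1 - i).choose (2 * k + 1 - j) : ℚ) *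
            (∑ v : V, hnum (2 * k + 1) (link Δ.faces v) i) := by
      rw [Finset.sum_congr rfl
        (fun v _ => fnum_eq_sum_hnum (2 * k + 1) (link Δ.faces v) j (by omega))]
      rw [Finset.sum_comm]
      exact Finset.sum_congr rfl fun i _ => by rw [Finset.mul_sum]
    have hj1 : ((j : ℚ) + 1) ≠ 0 := by positivity
    have hf : (fnum Δ.faces (j + 1) : ℚ)
        = (1 / ((j : ℚ) + 1)) * ∑ i ∈ Finset.range (j + 1),
            ((2 * k + 1 - i).choose (2 * k + 1 - j) : ℚ) *
              (∑ v : V, hnum (2 * k + 1) (link Δ.faces v) i) := by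
      rw [← hB, ← hA]
      field_simp
    rw [hf]
    simp only [Finset.mul_sum]
    refine Finset.sum_congr rfl fun i _ => Finset.sum_congr rfl fun v _ => by ring
  rw [Finset.sum_congr rfl step1]
  rw [Finset.sum_comm' (s := Finset.range r) (t := fun j => Finset.range (j + 1))
    (t' := Finset.range r) (s' := fun i => Finset.Icc i (r - 1))
    (h := by intro j i; simp only [Finset.mem_range, Finset.mem_Icc]; omega)]
  refine Finset.sum_congr rfl fun i hi => ?_
  rw [Finset.mem_range] at hi
  -- reindex both sides to range (r - i)
  rw [Finset.mul_sum]
  rw [← Finset.Ico_add_one_right_eq_Icc (a := i) (b := r - 1), Finset.sum_Ico_eq_sum_range]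
  rw [← Finset.Ico_add_one_right_eq_Icc (a := i + 1) (b := r), Finset.sum_Ico_eq_sum_range]
  rw [show r - 1 + 1 - i = r - i from by omega, show r + 1 - (i + 1) = r - i from by omega]
  refine Finset.sum_congr rfl fun t ht => ?_
  rw [Finset.mem_range] at ht
  have hjr : i + t + 1 ≤ r := by omega
  have h1 : 2 * k + 1 - (i + t) ≤ 2 * k + 1 - i := by omega
  have h2 : 2 * k + 2 - r ≤ 2 * k + 1 - (i + t) := by omega
  have hcm := Nat.choose_mul (n := 2 * k + 1 - i) h2
  have e1 : 2 * k + 1 - i - (2 * k + 2 - r) = r - i - 1 := by omega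
  have e2 : 2 * k + 1 - (i + t) - (2 * k + 2 - r) = r - (i + 1 + t) := by omega
  rw [e1, e2] at hcm
  have hcast : (((2 * k + 1 - i).choose (2 * k + 1 - (i + t))
        * (2 * k + 1 - (i + t)).choose (2 * k + 2 - r) : ℕ) : ℚ)
      = (((2 * k + 1 - i).choose (2 * k + 2 - r)
        * (r - i - 1).choose (r - (i + 1 + t)) : ℕ) : ℚ) :=
    congrArg (Nat.cast : ℕ → ℚ) hcm
  push_cast at hcast
  have e3 : r - (i + t + 1) = r - (i + 1 + t) := by omega
  rw [e3]
  have e4 : ((i : ℚ) + 1 + (t : ℚ)) = ((i : ℚ) + (t : ℚ)) + 1 := by ring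
  push_cast
  rw [e4]
  linear_combination ((-1 : ℚ) ^ (r - (i + 1 + t)) *
    (∑ v : V, hnum (2 * k + 1) (link Δ.faces v) i) / (((i : ℚ) + (t : ℚ)) + 1)) * hcast
end

section
/- For any sequence of real numbers h̃_0, ..., h̃_{d-1} and setting f_j = (j+1)^{-1} ∑_{i=0}^{j} C(d-1-i, d-1-j) h̃_i, if all h̃_i ≥ 0 then (-1)^i ∑_{j=0}^{i} (-1)^j f_j ≥ 0 for all 0 ≤ i ≤ ⌊(d-1)/2⌋. -/
open Finset

/-- alternating sum of a nondecreasing nonneg sequence, ending with + sign -/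
lemma alt_sum_nonneg_s12 (g : ℕ → ℝ) (hg : ∀ j, 0 ≤ g j) :
    ∀ (n l : ℕ), (∀ j, l ≤ j → j < l + n → g j ≤ g (j+1)) →
      0 ≤ ∑ j ∈ Finset.Icc l (l+n), (-1:ℝ)^(l+n-j) * g j ∧
      ∑ j ∈ Finset.Icc l (l+n), (-1:ℝ)^(l+n-j) * g j ≤ g (l+n) := by
  intro n
  induction n with
  | zero =>
    intro l _
    simp [hg l]
  | succ n ih =>
    intro l hmono
    have ih' := ih l (fun j hj hj' => hmono j hj (by omega))
    have hins : Finset.Icc l (l+(n+1)) = insert (l+n+1) (Finset.Icc l (l+n)) := by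
      ext x
      simp only [Finset.mem_Icc, Finset.mem_insert]
      omega
    have hsum : ∑ j ∈ Finset.Icc l (l+(n+1)), (-1:ℝ)^(l+(n+1)-j) * g j
        = g (l+n+1) - ∑ j ∈ Finset.Icc l (l+n), (-1:ℝ)^(l+n-j) * g j := by
      rw [hins, Finset.sum_insert (by simp)]
      have h1 : (-1:ℝ)^(l+(n+1)-(l+n+1)) = 1 := by
        have : l+(n+1)-(l+n+1) = 0 := by omega
        rw [this, pow_zero]
      have h2 : ∑ j ∈ Finset.Icc l (l+n), (-1:ℝ)^(l+(n+1)-j) * g j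
          = -∑ j ∈ Finset.Icc l (l+n), (-1:ℝ)^(l+n-j) * g j := by
        rw [← Finset.sum_neg_distrib]
        apply Finset.sum_congr rfl
        intro j hj
        simp only [Finset.mem_Icc] at hj
        have : l+(n+1)-j = (l+n-j)+1 := by omega
        rw [this, pow_succ]
        ring
      rw [h2, h1]
      ring
    rw [show l + (n+1) = l + n + 1 by omega] at hsum ⊢
    constructor
    · rw [hsum]
      have := hmono (l+n) (by omega) (by omega)
      linarith [ih'.2]
    · rw [hsum]
      linarith [ih'.1]

lemma choose_mono (D l j : ℕ) (hl : l ≤ j) (hj : 2*(j+1) ≤ D) :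
    ((D-l).choose (D-j) : ℝ) / (j+1) ≤ ((D-l).choose (D-(j+1)) : ℝ) / (j+2) := by
  have hnat : (j+2) * (D-l).choose (D-j) ≤ (j+1) * (D-l).choose (D-(j+1)) := by
    set a := D - l with ha
    set b := D - (j+1) with hb
    have hb1 : D - j = b + 1 := by omega
    have hab : a - b = j + 1 - l := by omega
    have key : (j+2) * (a-b) ≤ (j+1) * (b+1) := by
      rw [hab]
      calc (j+2) * (j+1-l) ≤ (b+1) * (j+1) := by
            apply Nat.mul_le_mul <;> omega
        _ = (j+1) * (b+1) := by ring
    have hid := Nat.choose_succ_right_eq a b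
    have h3 : ((j+2) * a.choose (b+1)) * (b+1) ≤ ((j+1) * a.choose b) * (b+1) := by
      calc ((j+2) * a.choose (b+1)) * (b+1) = (j+2) * (a.choose (b+1) * (b+1)) := by ring
        _ = (j+2) * (a.choose b * (a-b)) := by rw [hid]
        _ = a.choose b * ((j+2) * (a-b)) := by ring
        _ ≤ a.choose b * ((j+1) * (b+1)) := Nat.mul_le_mul_left _ key
        _ = ((j+1) * a.choose b) * (b+1) := by ring
    have := Nat.le_of_mul_le_mul_right h3 (by omega)
    rw [hb1]
    exact this
  rw [div_le_div_iff₀ (by positivity) (by positivity)]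
  have := (Nat.cast_le (α := ℝ)).mpr hnat
  push_cast at this ⊢
  linarith

/-- if f_j = (1/(j+1)) ∑_{i=0}^j C(d-1-i, d-1-j) h̃_i with all h̃_i ≥ 0, then
(-1)^i ∑_{j=0}^i (-1)^j f_j ≥ 0 for 0 ≤ i ≤ ⌊(d-1)/2⌋. -/
theorem statement12 (d : ℕ) (ht f : ℕ → ℝ)
    (hpos : ∀ i ≤ d - 1, 0 ≤ ht i)
    (hf : ∀ j ≤ d - 1, f j = (1 / ((j : ℝ) + 1)) *
      ∑ i ∈ Finset.range (j + 1), ((d - 1 - i).choose (d - 1 - j) : ℝ) * ht i) :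
    ∀ i ≤ (d - 1) / 2, 0 ≤ (-1 : ℝ) ^ i * ∑ j ∈ Finset.range (i + 1), (-1 : ℝ) ^ j * f j := by
  intro i hi
  set D := d - 1 with hD
  have h2i : 2 * i ≤ D := by omega
  have key : (-1 : ℝ) ^ i * ∑ j ∈ Finset.range (i + 1), (-1 : ℝ) ^ j * f j
      = ∑ l ∈ Finset.range (i+1), (∑ j ∈ Finset.Icc l i,
          (-1:ℝ)^(i-j) * (((D-l).choose (D-j) : ℝ) / (j+1))) * ht l := by
    rw [Finset.mul_sum]
    have step : ∀ j ∈ Finset.range (i+1),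
        (-1:ℝ)^i * ((-1:ℝ)^j * f j)
        = ∑ l ∈ Finset.range (j+1), (-1:ℝ)^(i-j) * (((D-l).choose (D-j) : ℝ) / (j+1)) * ht l := by
      intro j hj
      simp only [Finset.mem_range] at hj
      rw [hf j (by omega)]
      simp only [Finset.mul_sum]
      apply Finset.sum_congr rfl
      intro l hl
      have hsign : (-1:ℝ)^i * (-1:ℝ)^j = (-1:ℝ)^(i-j) := by
        have : i - j + j = i := by omega
        calc (-1:ℝ)^i * (-1:ℝ)^j = (-1:ℝ)^(i-j+j) * (-1:ℝ)^j := by rw [this]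
          _ = (-1:ℝ)^(i-j) * ((-1:ℝ)^j * (-1:ℝ)^j) := by rw [pow_add]; ring
          _ = (-1:ℝ)^(i-j) := by rw [← pow_add, ← two_mul, pow_mul]; norm_num
      rw [← hsign]
      ring
    rw [Finset.sum_congr rfl step]
    have := Finset.sum_Ico_Ico_comm 0 (i+1)
      (fun l j => (-1:ℝ)^(i-j) * (((D-l).choose (D-j) : ℝ) / (j+1)) * ht l)
    simp only [Finset.range_eq_Ico]
    rw [← this]
    refine Finset.sum_congr rfl fun l _ => ?_
    rw [Finset.sum_mul, Finset.Ico_add_one_right_eq_Icc]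
  rw [key]
  apply Finset.sum_nonneg
  intro l hl
  simp only [Finset.mem_range] at hl
  apply mul_nonneg _ (hpos l (by omega))
  have hli : l + (i - l) = i := by omega
  have := alt_sum_nonneg_s12 (fun j => ((D-l).choose (D-j) : ℝ) / (j+1))
    (fun j => by positivity) (i - l) l
    (fun j hj hj' => by
      have : j + 1 ≤ i := by omega
      exact_mod_cast choose_mono D l j hj (by omega))
  rw [hli] at this
  exact this.1
end
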